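/- Let M be a q×q mixed invertible integer matrix with q ≥ 1 and let Γ be the M-subgraph of ℕ^q containing a fixed point γ. Then the system of constant-coefficient binomial differential equations I(M) = ⟨∂^{w₊} − ∂^{w₋} : w a column of M⟩ has, among formal power series of the form G = Σ_{u∈Γ} λ_u x^u, a unique solution with λ_γ = 1, and in this solution every coefficient λ_u for u ∈ Γ is nonzero. -/

import Mathlib

lemma cast_fact_div_aux (a b : ℕ) :
    (((a + b).factorial / a.factorial : ℕ) : ℂ) =
      ((a + b).factorial : ℂ) / (a.factorial : ℂ) := by
  rw [Nat.cast_div (Nat.factorial_dvd_factorial (Nat.le_add_right a b))]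
  exact_mod_cast (Nat.factorial_pos a).ne'

/-- For a `q×q` mixed invertible integer matrix `M` and the
`M`-subgraph `Γ` of `ℕ^q` containing `γ`, the binomial system
`I(M) = ⟨∂^{w₊} − ∂^{w₋} : w column of M⟩` has a unique formal power series
solution supported on `Γ` with coefficient `1` at `x^γ`, and all the
coefficients of this solution on `Γ` are nonzero.  (A series `Σ c_u x^u` is a
solution iff for every column `w` and every `u`,
`((u+w₊)!/u!) c_{u+w₊} = ((u+w₋)!/u!) c_{u+w₋}`.) -/
theorem unique_series_solution_on_component
    (q : ℕ) (hq : 1 ≤ q) (M : Matrix (Fin q) (Fin q) ℤ)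
    (hdet : M.det ≠ 0)
    (hmix : ∀ k, (∃ i, 0 < M i k) ∧ (∃ i, M i k < 0))
    (γ : Fin q → ℕ) :
    let pp : Fin q → Fin q → ℕ := fun k i => (M i k).toNat
    let mm : Fin q → Fin q → ℕ := fun k i => (-(M i k)).toNat
    let adj : (Fin q → ℕ) → (Fin q → ℕ) → Prop := fun u v =>
      ∃ k : Fin q, (∀ i, (v i : ℤ) = (u i : ℤ) + M i k) ∨
                   (∀ i, (u i : ℤ) = (v i : ℤ) + M i k)
    let Γ : Set (Fin q → ℕ) := {u | Relation.ReflTransGen adj γ u}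
    let IsSol : ((Fin q → ℕ) → ℂ) → Prop := fun c =>
      ∀ (k : Fin q) (u : Fin q → ℕ),
        (∏ i, (((u i + pp k i).factorial / (u i).factorial : ℕ) : ℂ)) *
            c (fun i => u i + pp k i)
          = (∏ i, (((u i + mm k i).factorial / (u i).factorial : ℕ) : ℂ)) *
            c (fun i => u i + mm k i)
    (∃! c : (Fin q → ℕ) → ℂ,
        IsSol c ∧ (∀ u, u ∉ Γ → c u = 0) ∧ c γ = 1) ∧
    (∀ c : (Fin q → ℕ) → ℂ,
        IsSol c → (∀ u, u ∉ Γ → c u = 0) → c γ = 1 → ∀ u ∈ Γ, c u ≠ 0) := by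
  intro pp mm adj Γ IsSol
  classical
  have hpp : ∀ k i, pp k i = (M i k).toNat := fun _ _ => rfl
  have hmm : ∀ k i, mm k i = (-(M i k)).toNat := fun _ _ => rfl
  -- basic facts
  have hppmm : ∀ k i, (pp k i : ℤ) - (mm k i : ℤ) = M i k := by
    intro k i; rw [hpp, hmm]; omega
  set G : ℂ := ∏ i, ((γ i).factorial : ℂ) with hG
  have hprodne : ∀ u : Fin q → ℕ, (∏ i, ((u i).factorial : ℂ)) ≠ 0 := by
    intro u
    exact Finset.prod_ne_zero_iff.mpr fun i _ =>
      Nat.cast_ne_zero.mpr (Nat.factorial_pos _).ne'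
  have hGne : G ≠ 0 := hprodne γ
  set F : (Fin q → ℕ) → ℂ := fun u => G / ∏ i, ((u i).factorial : ℂ) with hFdef
  have hFne : ∀ u, F u ≠ 0 := fun u => div_ne_zero hGne (hprodne u)
  have hcast : ∀ (u p : Fin q → ℕ),
      (∏ i, (((u i + p i).factorial / (u i).factorial : ℕ) : ℂ)) =
        (∏ i, ((u i + p i).factorial : ℂ)) / (∏ i, ((u i).factorial : ℂ)) := by
    intro u p
    rw [← Finset.prod_div_distrib]
    exact Finset.prod_congr rfl fun i _ => cast_fact_div_aux _ _
  -- adjacency between u+mm and u+pp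
  have hadjbase : ∀ (k : Fin q) (m : Fin q → ℕ),
      adj (fun i => m i + mm k i) (fun i => m i + pp k i) := by
    intro k m
    exact ⟨k, Or.inl fun i => by have := hppmm k i; push_cast; omega⟩
  have hΓadj : ∀ u v, u ∈ Γ → adj u v → v ∈ Γ := by
    intro u v hu h
    exact Relation.ReflTransGen.tail hu h
  have hadjsymm : ∀ u v, adj u v → adj v u := by
    rintro u v ⟨k, h | h⟩
    · exact ⟨k, Or.inr h⟩
    · exact ⟨k, Or.inl h⟩
  -- decomposition of an edge over a common base point
  have hdec : ∀ (k : Fin q) (u v : Fin q → ℕ), (∀ i, (v i : ℤ) = (u i : ℤ) + M i k) →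
      (∀ i, u i = min (u i) (v i) + mm k i) ∧ (∀ i, v i = min (u i) (v i) + pp k i) := by
    intro k u v h
    have h3 : ∀ i, pp k i = 0 ∨ mm k i = 0 := by
      intro i; rw [hpp, hmm]; omega
    constructor <;> intro i <;>
      (have h1 := h i; have h2 := hppmm k i; have h4 := h3 i; omega)
  -- the two step lemmas
  have hstep₁ : ∀ c, IsSol c → ∀ (k : Fin q) (m : Fin q → ℕ),
      c (fun i => m i + mm k i) = F (fun i => m i + mm k i) →
      c (fun i => m i + pp k i) = F (fun i => m i + pp k i) := by
    intro c hc k m hu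
    have h := hc k m
    rw [hcast, hcast, hu] at h
    simp only [hFdef] at h ⊢
    have hA := hprodne (fun i => m i + pp k i)
    have hB := hprodne m
    have hC := hprodne (fun i => m i + mm k i)
    field_simp at h
    have h3 : ((∏ i, ((m i + pp k i).factorial : ℂ)) * c (fun i => m i + pp k i)) *
        ((∏ i, ((m i).factorial : ℂ)) * (∏ i, ((m i + mm k i).factorial : ℂ))) =
        G * ((∏ i, ((m i).factorial : ℂ)) * (∏ i, ((m i + mm k i).factorial : ℂ))) := by
      linear_combination (∏ i, ((m i).factorial : ℂ)) * (∏ i, ((m i + mm k i).factorial : ℂ)) * h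
    have h4 := mul_right_cancel₀ (mul_ne_zero hB hC) h3
    rw [eq_div_iff hA]
    linear_combination h4
  have hstep₂ : ∀ c, IsSol c → ∀ (k : Fin q) (m : Fin q → ℕ),
      c (fun i => m i + pp k i) = F (fun i => m i + pp k i) →
      c (fun i => m i + mm k i) = F (fun i => m i + mm k i) := by
    intro c hc k m hu
    have h := hc k m
    rw [hcast, hcast, hu] at h
    simp only [hFdef] at h ⊢
    have hA := hprodne (fun i => m i + pp k i)
    have hB := hprodne m
    have hC := hprodne (fun i => m i + mm k i)
    field_simp at h
    have h3 : ((∏ i, ((m i + mm k i).factorial : ℂ)) * c (fun i => m i + mm k i)) *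
        ((∏ i, ((m i).factorial : ℂ)) * (∏ i, ((m i + pp k i).factorial : ℂ))) =
        G * ((∏ i, ((m i).factorial : ℂ)) * (∏ i, ((m i + pp k i).factorial : ℂ))) := by
      linear_combination -((∏ i, ((m i).factorial : ℂ)) * (∏ i, ((m i + pp k i).factorial : ℂ))) * h
    have h4 := mul_right_cancel₀ (mul_ne_zero hB hA) h3
    rw [eq_div_iff hC]
    linear_combination h4
  -- uniqueness on the component
  have huniq : ∀ c, IsSol c → c γ = 1 → ∀ u ∈ Γ, c u = F u := by
    intro c hc hγ u hu
    induction hu with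
    | refl =>
        rw [hγ, hFdef]
        exact (div_self hGne).symm
    | @tail b v _ hbv ih =>
        obtain ⟨k, h | h⟩ := hbv
        · obtain ⟨h1, h2⟩ := hdec k b v h
          have hb : b = fun i => min (b i) (v i) + mm k i := funext h1
          have hv : v = fun i => min (b i) (v i) + pp k i := funext h2
          rw [hv]
          exact hstep₁ c hc k _ (by rw [← hb]; exact ih)
        · obtain ⟨h1, h2⟩ := hdec k v b h
          have hb : b = fun i => min (v i) (b i) + pp k i := funext h2
          have hv : v = fun i => min (v i) (b i) + mm k i := funext h1
          rw [hv]
          exact hstep₂ c hc k _ (by rw [← hb]; exact ih)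
  -- the candidate solution
  set c0 : (Fin q → ℕ) → ℂ := fun u => if u ∈ Γ then F u else 0 with hc0
  have hΓiff : ∀ (k : Fin q) (u : Fin q → ℕ),
      ((fun i => u i + pp k i) ∈ Γ ↔ (fun i => u i + mm k i) ∈ Γ) := by
    intro k u
    constructor
    · intro h; exact hΓadj _ _ h (hadjsymm _ _ (hadjbase k u))
    · intro h; exact hΓadj _ _ h (hadjbase k u)
  have hc0sol : IsSol c0 := by
    intro k u
    by_cases hb : (fun i => u i + mm k i) ∈ Γ
    · have ha : (fun i => u i + pp k i) ∈ Γ := (hΓiff k u).mpr hb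
      rw [hcast, hcast]
      simp only [hc0, if_pos ha, if_pos hb, hFdef]
      have hA := hprodne (fun i => u i + pp k i)
      have hB := hprodne u
      have hC := hprodne (fun i => u i + mm k i)
      field_simp
    · have ha : (fun i => u i + pp k i) ∉ Γ := fun h => hb ((hΓiff k u).mp h)
      simp only [hc0, if_neg ha, if_neg hb, mul_zero]
  have hγΓ : γ ∈ Γ := Relation.ReflTransGen.refl
  have hc0γ : c0 γ = 1 := by
    simp only [hc0, if_pos hγΓ, hFdef]
    exact div_self hGne
  constructor
  · refine ⟨c0, ⟨hc0sol, fun u hu => by simp only [hc0, if_neg hu], hc0γ⟩, ?_⟩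
    rintro c ⟨hsol, hsupp, hone⟩
    funext u
    by_cases hu : u ∈ Γ
    · rw [huniq c hsol hone u hu]
      simp only [hc0, if_pos hu]
    · rw [hsupp u hu]
      simp only [hc0, if_neg hu]
  · intro c hsol _ hone u hu
    rw [huniq c hsol hone u hu]
    exact hFne u
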